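/- Let A_1 and A_2 be finite idempotent algebras of the same signature, a,b ∈ A_1, and c,d ∈ A_2. Let θ be a congruence of Sg{a,b} in A_1 such that b ∈ Sg{a, b″} for every b″ ∈ b^θ. Let g be a ternary term of the common signature such that g^{A_1}(b,a,a) θ b and g^{A_2}(c,d,d) = d. Then there exists a binary term t such that t^{A_1}(b,a) = b and t^{A_2}(c,d) = d. -/
import Mathlib


namespace UA

/-- Terms over a signature `(ι, ar)` with `n` variables. -/
inductive Term (ι : Type) (ar : ι → ℕ) (n : ℕ) : Type where
  | var : Fin n → Term ι ar n
  | app : (i : ι) → (Fin (ar i) → Term ι ar n) → Term ι ar n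

/-- Evaluation of a term in an algebra with operations `ops`. -/
def Term.eval {ι : Type} {ar : ι → ℕ} {A : Type} (ops : ∀ i : ι, (Fin (ar i) → A) → A)
    {n : ℕ} : Term ι ar n → (Fin n → A) → A
  | .var j, x => x j
  | .app i ts, x => ops i fun k => Term.eval ops (ts k) x

variable {ι : Type} {ar : ι → ℕ} {A : Type}

/-- An algebra is idempotent if every basic operation is. -/
def Idempotent (ops : ∀ i : ι, (Fin (ar i) → A) → A) : Prop :=
  ∀ (i : ι) (x : A), ops i (fun _ => x) = x

/-- A subuniverse: a subset closed under all basic operations. -/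
def IsSubuniverse (ops : ∀ i : ι, (Fin (ar i) → A) → A) (S : Set A) : Prop :=
  ∀ (i : ι) (xs : Fin (ar i) → A), (∀ k, xs k ∈ S) → ops i xs ∈ S

/-- The subuniverse generated by `X`. -/
def Sg (ops : ∀ i : ι, (Fin (ar i) → A) → A) (X : Set A) : Set A :=
  ⋂₀ {S | IsSubuniverse ops S ∧ X ⊆ S}

/-- A tolerance: a reflexive symmetric compatible binary relation. -/
def IsTolerance (ops : ∀ i : ι, (Fin (ar i) → A) → A) (τ : A → A → Prop) : Prop :=
  (∀ x, τ x x) ∧ (∀ x y, τ x y → τ y x) ∧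
  ∀ (i : ι) (xs ys : Fin (ar i) → A), (∀ k, τ (xs k) (ys k)) → τ (ops i xs) (ops i ys)

/-- A congruence: a compatible equivalence relation. -/
def IsCongruence (ops : ∀ i : ι, (Fin (ar i) → A) → A) (θ : A → A → Prop) : Prop :=
  Equivalence θ ∧
  ∀ (i : ι) (xs ys : Fin (ar i) → A), (∀ k, θ (xs k) (ys k)) → θ (ops i xs) (ops i ys)

/-- A congruence of the subalgebra with universe `B`, viewed as a partial
equivalence relation on the big algebra whose domain is exactly `B` and which is
compatible with all operations. -/
def IsCongruenceOn (ops : ∀ i : ι, (Fin (ar i) → A) → A) (B : Set A)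
    (θ : A → A → Prop) : Prop :=
  (∀ x y, θ x y → x ∈ B ∧ y ∈ B) ∧
  (∀ x ∈ B, θ x x) ∧
  (∀ x y, θ x y → θ y x) ∧
  (∀ x y z, θ x y → θ y z → θ x z) ∧
  ∀ (i : ι) (xs ys : Fin (ar i) → A), (∀ k, θ (xs k) (ys k)) → θ (ops i xs) (ops i ys)

/-- `f` is a binary term operation of the algebra. -/
def IsTermOp2 (ops : ∀ i : ι, (Fin (ar i) → A) → A) (f : A → A → A) : Prop :=
  ∃ t : Term ι ar 2, ∀ x y, f x y = t.eval ops ![x, y]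

/-- `g` is a ternary term operation of the algebra. -/
def IsTermOp3 (ops : ∀ i : ι, (Fin (ar i) → A) → A) (g : A → A → A → A) : Prop :=
  ∃ t : Term ι ar 3, ∀ x y z, g x y z = t.eval ops ![x, y, z]

/-- Connectivity of `a` and `b` in the hypergraph `H(A)` whose hyperedges are the
nonempty proper subuniverses: a chain of hyperedges with consecutive ones
intersecting, the first containing `a`, the last containing `b`. -/
def HConnected (ops : ∀ i : ι, (Fin (ar i) → A) → A) (a b : A) : Prop :=
  ∃ L : List (Set A),
    (∀ S ∈ L, IsSubuniverse ops S ∧ S.Nonempty ∧ S ≠ Set.univ) ∧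
    L.Chain' (fun S T => (S ∩ T).Nonempty) ∧
    ∃ h : L ≠ [], a ∈ L.head h ∧ b ∈ L.getLast h


/-- Substitution of terms into a term. -/
def Term.subst {ι : Type} {ar : ι → ℕ} {n m : ℕ} :
    Term ι ar n → (Fin n → Term ι ar m) → Term ι ar m
  | .var j, σ => σ j
  | .app i ts, σ => .app i fun k => (ts k).subst σ

theorem Term.eval_subst {ι : Type} {ar : ι → ℕ} {A : Type}
    (ops : ∀ i : ι, (Fin (ar i) → A) → A) {n m : ℕ}
    (t : Term ι ar n) (σ : Fin n → Term ι ar m) (x : Fin m → A) :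
    (t.subst σ).eval ops x = t.eval ops fun j => (σ j).eval ops x := by
  induction t with
  | var j => rfl
  | app i ts ih => simp only [Term.subst, Term.eval]; exact congrArg _ (funext fun k => ih k)

theorem Term.eval_idem {ι : Type} {ar : ι → ℕ} {A : Type}
    {ops : ∀ i : ι, (Fin (ar i) → A) → A} (hid : Idempotent ops) {n : ℕ}
    (t : Term ι ar n) (x : A) : t.eval ops (fun _ => x) = x := by
  induction t with
  | var j => rfl
  | app i ts ih =>
    have : (fun k => (ts k).eval ops (fun _ => x)) = fun _ => x := funext fun k => ih k
    simp only [Term.eval, this, hid i x]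

theorem mem_Sg_pair {ι : Type} {ar : ι → ℕ} {A : Type}
    (ops : ∀ i : ι, (Fin (ar i) → A) → A) (p q u : A)
    (hu : u ∈ Sg ops ({p, q} : Set A)) :
    ∃ t : Term ι ar 2, u = t.eval ops ![p, q] := by
  have hT : IsSubuniverse ops {u | ∃ t : Term ι ar 2, u = t.eval ops ![p, q]} := by
    intro i xs hxs
    choose ts hts using hxs
    exact ⟨.app i ts, by simp only [Term.eval]; exact congrArg _ (funext hts)⟩
  have hX : ({p, q} : Set A) ⊆ {u | ∃ t : Term ι ar 2, u = t.eval ops ![p, q]} := by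
    rintro x (rfl | rfl)
    · exact ⟨.var 0, rfl⟩
    · exact ⟨.var 1, rfl⟩
  exact hu _ ⟨hT, hX⟩

/-- a ternary term behaving affinely in `A1` (mod θ) and as a
majority-style operation in `A2` yields a binary term `t` with
`t(b,a) = b` and `t(c,d) = d`. -/
theorem stmt_17 {ι : Type} {ar : ι → ℕ} {A1 A2 : Type}
    [Fintype A1] [Nonempty A1] [Fintype A2] [Nonempty A2]
    (ops1 : ∀ i : ι, (Fin (ar i) → A1) → A1)
    (ops2 : ∀ i : ι, (Fin (ar i) → A2) → A2)
    (hid1 : Idempotent ops1) (hid2 : Idempotent ops2)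
    (a b : A1) (c d : A2)
    (θ : A1 → A1 → Prop)
    (hθ : IsCongruenceOn ops1 (Sg ops1 ({a, b} : Set A1)) θ)
    (hgen : ∀ b'', θ b b'' → b ∈ Sg ops1 ({a, b''} : Set A1))
    (g : Term ι ar 3)
    (hg1 : θ (g.eval ops1 ![b, a, a]) b)
    (hg2 : g.eval ops2 ![c, d, d] = d) :
    ∃ t : Term ι ar 2,
      t.eval ops1 ![b, a] = b ∧ t.eval ops2 ![c, d] = d := by
  set b' := g.eval ops1 ![b, a, a] with hb'
  have hbb' : θ b b' := hθ.2.2.1 _ _ hg1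
  obtain ⟨s, hs⟩ := mem_Sg_pair ops1 a b' b (hgen b' hbb')
  set σ : Fin 2 → Term ι ar 2 :=
    ![Term.var 1, g.subst ![Term.var 0, Term.var 1, Term.var 1]] with hσ
  refine ⟨s.subst σ, ?_, ?_⟩
  · rw [Term.eval_subst]
    have h1 : (fun j => (σ j).eval ops1 ![b, a]) = ![a, b'] := by
      funext j
      fin_cases j
      · rfl
      · show (g.subst ![Term.var 0, Term.var 1, Term.var 1]).eval ops1 ![b, a] = b'
        rw [Term.eval_subst, hb']
        congr 1
        funext k
        fin_cases k <;> rfl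
    rw [h1, ← hs]
  · rw [Term.eval_subst]
    have h2 : (fun j => (σ j).eval ops2 ![c, d]) = fun _ => d := by
      funext j
      fin_cases j
      · rfl
      · show (g.subst ![Term.var 0, Term.var 1, Term.var 1]).eval ops2 ![c, d] = d
        have hk : (fun k => (![Term.var 0, Term.var 1, Term.var 1] k).eval ops2 ![c, d])
            = ![c, d, d] := by funext k; fin_cases k <;> rfl
        rw [Term.eval_subst, hk, hg2]
    rw [h2, Term.eval_idem hid2]

end UA
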